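/- Let v, v′ ∈ (1/4+(1/2)ℤ≥0)ⁿ₊. If v is (1/4)ℤ-triangular and |v′| < |v|, then it is not the case that p_{1/4}(v′) ≤ p_{1/4}(v) in the dominance order. -/

import Mathlib

open Finset

/-- A partition of `N`: an antitone function `ℕ → ℕ` (the 0-indexed parts, padded with
zeros) supported on `{0, …, N-1}` whose parts sum to `N`. -/
def IsPartition (N : ℕ) (p : ℕ → ℕ) : Prop :=
  Antitone p ∧ (∀ i, N ≤ i → p i = 0) ∧ ∑ i ∈ Finset.range N, p i = N

/-- Dominance order: `Dominates p q` means `q ≤ p`, i.e. every partial sum of the parts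
of `q` is at most the corresponding partial sum of the parts of `p`. -/
def Dominates (p q : ℕ → ℕ) : Prop :=
  ∀ j, ∑ i ∈ Finset.range j, q i ≤ ∑ i ∈ Finset.range j, p i

/-- Multiplicity of the value `k` among the first `N` parts of `p`. -/
def mult (N : ℕ) (p : ℕ → ℕ) (k : ℕ) : ℕ :=
  ((Finset.range N).filter (fun i => p i = k)).card

/-- Multiplicity of the real value `s` among the entries of the tuple `v`. -/
noncomputable def multR {n : ℕ} (v : Fin n → ℝ) (s : ℝ) : ℕ :=
  {i : Fin n | v i = s}.ncard

/-- Euclidean norm of a real tuple. -/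
noncomputable def enormR {n : ℕ} (v : Fin n → ℝ) : ℝ :=
  Real.sqrt (∑ i, (v i) ^ 2)

/-- `IsVQuarter n p w` says that the weakly decreasing tuple `w : Fin n → ℝ` is the tuple
having `ν_k = p (k-1)` entries equal to `(2k-1)/4` for each `k ≥ 1`, where
`p = [ν₁, ν₂, …]` is a partition of `n`. -/
def IsVQuarter (n : ℕ) (p : ℕ → ℕ) (w : Fin n → ℝ) : Prop :=
  Antitone w ∧ (∀ i, ∃ k : ℕ, 1 ≤ k ∧ w i = (2 * (k : ℝ) - 1) / 4) ∧
  ∀ k : ℕ, 1 ≤ k → multR w ((2 * (k : ℝ) - 1) / 4) = p (k - 1)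

/-- `IsPQuarter n v q` says that the partition `q` of `n` is the weakly decreasing
rearrangement of the multiplicity sequence `[m_v(1/4), m_v(3/4), m_v(5/4), …]`. -/
def IsPQuarter (n : ℕ) (v : Fin n → ℝ) (q : ℕ → ℕ) : Prop :=
  IsPartition n q ∧
  ∀ c : ℕ, 1 ≤ c →
    mult n q c = {k : ℕ | 1 ≤ k ∧ multR v ((2 * (k : ℝ) - 1) / 4) = c}.ncard


namespace S9aux

noncomputable def Lv (k : ℕ) : ℝ := (2*(k:ℝ)-1)/4

lemma Lv_le {j k : ℕ} : Lv j ≤ Lv k ↔ j ≤ k := by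
  unfold Lv
  constructor
  · intro h
    by_contra hc
    push_neg at hc
    have : (k:ℝ) < j := by exact_mod_cast hc
    linarith
  · intro h
    have : (j:ℝ) ≤ k := by exact_mod_cast h
    linarith

lemma Lv_eq {j k : ℕ} : Lv j = Lv k ↔ j = k := by
  constructor
  · intro h; exact le_antisymm (Lv_le.1 h.le) (Lv_le.1 h.ge)
  · rintro rfl; rfl

lemma sum_Icc2 (k : ℕ) : ∑ j ∈ Icc 2 k, ((j:ℝ)-1)/2 = (k:ℝ)*((k:ℝ)-1)/4 := by
  induction k with
  | zero => simp
  | succ k ih =>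
    rcases Nat.lt_or_ge k 1 with h | h
    · interval_cases k
      · simp [show Icc 2 1 = (∅ : Finset ℕ) from rfl]
    · rw [Finset.sum_Icc_succ_top (by omega), ih]
      push_cast
      ring

open Classical in
noncomputable def multF {n : ℕ} (w : Fin n → ℝ) (s : ℝ) : ℕ :=
  (univ.filter fun i => w i = s).card

open Classical in
lemma multR_eq_multF {n : ℕ} (w : Fin n → ℝ) (s : ℝ) : multR w s = multF w s := by
  rw [multR, multF, ← Set.ncard_coe_finset]
  congr 1
  ext i
  simp

lemma multF_le {n : ℕ} (w : Fin n → ℝ) (s : ℝ) : multF w s ≤ n := by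
  classical
  rw [multF]
  exact le_trans (Finset.card_filter_le _ _) (by simp)

lemma exists_of_multF_pos {n : ℕ} {w : Fin n → ℝ} {s : ℝ} (h : 1 ≤ multF w s) :
    ∃ i, w i = s := by
  classical
  rw [multF] at h
  obtain ⟨i, hi⟩ := Finset.card_pos.1 h
  exact ⟨i, (Finset.mem_filter.1 hi).2⟩

open Classical in
noncomputable def NcF (n : ℕ) (w : Fin n → ℝ) (j : ℕ) : ℕ :=
  (univ.filter fun i => Lv j ≤ w i).card

lemma lower_eq_range (s : Finset ℕ) (h : ∀ j k, j ≤ k → k ∈ s → j ∈ s) :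
    s = Finset.range s.card := by
  have h1 : Finset.range s.card ⊆ s := by
    intro k hk
    rw [Finset.mem_range] at hk
    by_contra hks
    have hsub : s ⊆ Finset.range k := by
      intro m hm
      rw [Finset.mem_range]
      by_contra hmk
      exact hks (h k m (le_of_not_gt hmk) hm)
    have := Finset.card_le_card hsub
    simp only [Finset.card_range] at this
    omega
  have h2 : s ⊆ Finset.range s.card := by
    intro m hm
    rw [Finset.mem_range]
    by_contra hmk
    have hsub : Finset.range (m+1) ⊆ s := by
      intro j hj
      rw [Finset.mem_range] at hj
      exact h j m (by omega) hm
    have := Finset.card_le_card hsub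
    simp only [Finset.card_range] at this
    omega
  exact Finset.Subset.antisymm h2 h1

end S9aux
open Finset
namespace S9aux

open Classical in
lemma count_mult {n : ℕ} (w : Fin n → ℝ) (κ : Fin n → ℕ)
    (hκ1 : ∀ i, 1 ≤ κ i) (hw : ∀ i, w i = Lv (κ i)) :
    ∀ t : ℕ, NcF n w (t+1) + ∑ k ∈ Icc 1 t, multF w (Lv k) = n := by
  intro t
  induction t with
  | zero =>
    simp only [Icc_self, Finset.sum_empty, Nat.add_zero, show Icc 1 0 = ∅ from rfl]
    rw [NcF]
    rw [Finset.filter_true_of_mem]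
    · simp
    · intro i _
      rw [hw i]
      exact Lv_le.2 (hκ1 i)
  | succ t ih =>
    have hstep : NcF n w (t+1) = NcF n w (t+1+1) + multF w (Lv (t+1)) := by
      rw [NcF, NcF, multF]
      have hsplit : (univ.filter fun i => Lv (t+1) ≤ w i)
          = (univ.filter fun i => Lv (t+1+1) ≤ w i) ∪ (univ.filter fun i => w i = Lv (t+1)) := by
        ext i
        simp only [mem_filter, mem_union, mem_univ, true_and]
        rw [hw i]
        simp only [Lv_le, Lv_eq]
        omega
      rw [hsplit, Finset.card_union_of_disjoint]
      rw [Finset.disjoint_left]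
      intro i h1 h2
      simp only [mem_filter, mem_univ, true_and] at h1 h2
      rw [h2, Lv_le] at h1
      omega
    rw [Finset.sum_Icc_succ_top (by omega : 1 ≤ t + 1)]
    omega

open Classical in
lemma normsq_formula {n K : ℕ} (w : Fin n → ℝ) (κ : Fin n → ℕ)
    (hκK : ∀ i, κ i ≤ K) (hw : ∀ i, w i = Lv (κ i)) :
    ∑ i, (w i)^2 = (n:ℝ)/16 + ∑ j ∈ Icc 2 K, ((j:ℝ)-1)/2 * ((NcF n w j : ℕ) : ℝ) := by
  have point : ∀ i, (w i)^2 = 1/16 + ∑ j ∈ Icc 2 K, (if Lv j ≤ w i then ((j:ℝ)-1)/2 else 0) := by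
    intro i
    rw [hw i]
    have hf : (Icc 2 K).filter (fun j => Lv j ≤ Lv (κ i)) = Icc 2 (κ i) := by
      ext j
      simp only [mem_filter, mem_Icc, Lv_le]
      have := hκK i
      omega
    rw [← Finset.sum_filter, hf, sum_Icc2]
    unfold Lv
    ring
  rw [Finset.sum_congr rfl (fun i _ => point i), Finset.sum_add_distrib, Finset.sum_comm]
  congr 1
  · simp only [Finset.sum_const, Finset.card_univ, Fintype.card_fin, nsmul_eq_mul]
    ring
  · apply Finset.sum_congr rfl
    intro j _
    rw [← Finset.sum_filter, Finset.sum_const, nsmul_eq_mul, mul_comm, NcF]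

lemma part_le {n : ℕ} {r : ℕ → ℕ} (hr : IsPartition n r) (k : ℕ) : r k ≤ n := by
  rcases Nat.lt_or_ge k n with h | h
  · calc r k ≤ ∑ i ∈ range n, r i :=
        Finset.single_le_sum (fun i _ => Nat.zero_le _) (mem_range.2 h)
    _ = n := hr.2.2
  · rw [hr.2.1 k h]; exact Nat.zero_le n

lemma part_sum_min {n : ℕ} {r : ℕ → ℕ} (hr : IsPartition n r) (t : ℕ) :
    ∑ k ∈ range t, r k
      = ∑ c ∈ Icc 1 n, min t (((range n).filter fun k => c ≤ r k).card) := by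
  have hpoint : ∀ k, r k = ∑ c ∈ Icc 1 n, if c ≤ r k then 1 else 0 := by
    intro k
    rw [← Finset.sum_filter]
    have hfc : (Icc 1 n).filter (fun c => c ≤ r k) = Icc 1 (r k) := by
      ext c
      simp only [mem_filter, mem_Icc]
      have := part_le hr k
      omega
    rw [hfc]
    simp [Nat.card_Icc]
  rw [Finset.sum_congr rfl (fun k _ => hpoint k), Finset.sum_comm]
  apply Finset.sum_congr rfl
  intro c hc
  have hc1 : 1 ≤ c := (mem_Icc.1 hc).1
  set D := (range n).filter fun k => c ≤ r k with hDdef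
  have hD : D = range D.card := by
    apply lower_eq_range
    intro j k hjk hk
    simp only [hDdef, mem_filter, mem_range] at hk ⊢
    exact ⟨lt_of_le_of_lt hjk hk.1, le_trans hk.2 (hr.1 hjk)⟩
  have hft : (range t).filter (fun k => c ≤ r k) = range (min t D.card) := by
    ext k
    simp only [mem_filter, mem_range, lt_min_iff]
    constructor
    · rintro ⟨hkt, hck⟩
      refine ⟨hkt, ?_⟩
      have hkn : k < n := by
        by_contra hkn
        push_neg at hkn
        rw [hr.2.1 k hkn] at hck
        omega
      have hkD : k ∈ D := mem_filter.2 ⟨mem_range.2 hkn, hck⟩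
      rw [hD] at hkD
      exact mem_range.1 hkD
    · rintro ⟨hkt, hkD⟩
      have : k ∈ D := by rw [hD]; exact mem_range.2 hkD
      exact ⟨hkt, (mem_filter.1 this).2⟩
  rw [← Finset.card_filter, hft, Finset.card_range]

lemma count_ge_eq {n K : ℕ} {r : ℕ → ℕ} (hr : IsPartition n r) (M : ℕ → ℕ)
    (hMn : ∀ k, M k ≤ n)
    (hmult : ∀ c, 1 ≤ c → mult n r c = ((Icc 1 K).filter fun k => M k = c).card)
    (c : ℕ) (hc : 1 ≤ c) :
    ((range n).filter fun k => c ≤ r k).card = ((Icc 1 K).filter fun k => c ≤ M k).card := by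
  have h1 : (range n).filter (fun k => c ≤ r k)
      = (Icc c n).biUnion (fun c' => (range n).filter fun k => r k = c') := by
    ext k
    simp only [mem_filter, mem_biUnion, mem_Icc, mem_range]
    constructor
    · rintro ⟨hkn, hck⟩
      exact ⟨r k, ⟨hck, part_le hr k⟩, hkn, rfl⟩
    · rintro ⟨c', ⟨hcc, _⟩, hkn, hrk⟩
      exact ⟨hkn, hrk ▸ hcc⟩
  have h2 : (Icc 1 K).filter (fun k => c ≤ M k)
      = (Icc c n).biUnion (fun c' => (Icc 1 K).filter fun k => M k = c') := by
    ext k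
    simp only [mem_filter, mem_biUnion, mem_Icc]
    constructor
    · rintro ⟨hk, hck⟩
      exact ⟨M k, ⟨hck, hMn k⟩, hk, rfl⟩
    · rintro ⟨c', ⟨hcc, _⟩, hk, hrk⟩
      exact ⟨hk, hrk ▸ hcc⟩
  have hd1 : ∀ x ∈ Icc c n, ∀ y ∈ Icc c n, x ≠ y →
      Disjoint ((range n).filter fun k => r k = x) ((range n).filter fun k => r k = y) := by
    intro x _ y _ hxy
    rw [Finset.disjoint_left]
    intro k hk1 hk2
    simp only [mem_filter] at hk1 hk2
    exact hxy (hk1.2 ▸ hk2.2 ▸ rfl)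
  have hd2 : ∀ x ∈ Icc c n, ∀ y ∈ Icc c n, x ≠ y →
      Disjoint ((Icc 1 K).filter fun k => M k = x) ((Icc 1 K).filter fun k => M k = y) := by
    intro x _ y _ hxy
    rw [Finset.disjoint_left]
    intro k hk1 hk2
    simp only [mem_filter] at hk1 hk2
    exact hxy (hk1.2 ▸ hk2.2 ▸ rfl)
  rw [h1, h2, Finset.card_biUnion hd1, Finset.card_biUnion hd2]
  apply Finset.sum_congr rfl
  intro c' hc'
  have hcc' : 1 ≤ c' := le_trans hc (mem_Icc.1 hc').1
  have := hmult c' hcc'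
  rw [← this]
  rfl

lemma msum_le {K n : ℕ} (M : ℕ → ℕ) (hMn : ∀ k, M k ≤ n)
    (hK : ∀ k, 1 ≤ M k → k ≤ K) (t : ℕ) :
    ∑ k ∈ Icc 1 t, M k ≤ ∑ c ∈ Icc 1 n, min t (((Icc 1 K).filter fun k => c ≤ M k).card) := by
  have hpoint : ∀ k, M k = ∑ c ∈ Icc 1 n, if c ≤ M k then 1 else 0 := by
    intro k
    rw [← Finset.sum_filter]
    have hfc : (Icc 1 n).filter (fun c => c ≤ M k) = Icc 1 (M k) := by
      ext c
      simp only [mem_filter, mem_Icc]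
      have := hMn k
      omega
    rw [hfc]
    simp [Nat.card_Icc]
  rw [Finset.sum_congr rfl (fun k _ => hpoint k), Finset.sum_comm]
  apply Finset.sum_le_sum
  intro c hc
  have hc1 : 1 ≤ c := (mem_Icc.1 hc).1
  rw [← Finset.card_filter]
  apply le_min
  · calc ((Icc 1 t).filter fun k => c ≤ M k).card ≤ (Icc 1 t).card :=
        Finset.card_filter_le _ _
    _ = t := by simp [Nat.card_Icc]
  · apply Finset.card_le_card
    intro k hk
    simp only [mem_filter, mem_Icc] at hk ⊢
    exact ⟨⟨hk.1.1, hK k (le_trans hc1 hk.2)⟩, hk.2⟩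

lemma reindex_count {n K : ℕ} {p : ℕ → ℕ} (hp : IsPartition n p) (M : ℕ → ℕ)
    (hM : ∀ k, 1 ≤ k → M k = p (k-1)) (hnK : n ≤ K) (c : ℕ) (hc : 1 ≤ c) :
    ((Icc 1 K).filter fun k => c ≤ M k).card = ((range n).filter fun j => c ≤ p j).card := by
  apply Finset.card_bij (fun k _ => k - 1)
  · intro k hk
    simp only [mem_filter, mem_Icc] at hk
    have h1 : 1 ≤ k := hk.1.1
    have hpk : c ≤ p (k-1) := by rw [← hM k h1]; exact hk.2
    simp only [mem_filter, mem_range]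
    refine ⟨?_, hpk⟩
    by_contra h
    push_neg at h
    rw [hp.2.1 _ h] at hpk
    omega
  · intro k1 hk1 k2 hk2 h
    simp only [mem_filter, mem_Icc] at hk1 hk2
    omega
  · intro j hj
    simp only [mem_filter, mem_range] at hj
    refine ⟨j+1, ?_, by omega⟩
    simp only [mem_filter, mem_Icc]
    refine ⟨⟨by omega, by omega⟩, ?_⟩
    rw [hM (j+1) (by omega)]
    simpa using hj.2

lemma ncard_eq_filter {K n : ℕ} (w : Fin n → ℝ) (κ : Fin n → ℕ)
    (hw : ∀ i, w i = Lv (κ i)) (hκK : ∀ i, κ i ≤ K) (c : ℕ) (hc : 1 ≤ c) :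
    {k : ℕ | 1 ≤ k ∧ multR w (Lv k) = c}.ncard
      = ((Icc 1 K).filter fun k => multF w (Lv k) = c).card := by
  rw [← Set.ncard_coe_finset]
  congr 1
  ext k
  simp only [Finset.coe_filter, Set.mem_setOf_eq, mem_Icc, multR_eq_multF]
  constructor
  · rintro ⟨h1, h2⟩
    refine ⟨⟨h1, ?_⟩, h2⟩
    obtain ⟨i, hi⟩ := exists_of_multF_pos (w := w) (s := Lv k) (by omega)
    have hik : κ i = k := Lv_eq.1 ((hw i).symm.trans hi)
    rw [← hik]
    exact hκK i
  · rintro ⟨⟨h1, _⟩, h2⟩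
    exact ⟨h1, h2⟩

end S9aux

/-- Let `v, v′` be weakly decreasing `n`-tuples with all entries of
the form `(2k-1)/4` for `k ≥ 1`.  If `v` is `(1/4)ℤ`-triangular (i.e. it lies in
the image of `v_{1/4}`) and `|v′| < |v|`, then `p_{1/4}(v′) ≰ p_{1/4}(v)`
in the dominance order. -/
theorem statement9 (n : ℕ) (hn : 1 ≤ n)
    (v v' : Fin n → ℝ) (hv : Antitone v) (hv' : Antitone v')
    (hvmem : ∀ i, ∃ k : ℕ, 1 ≤ k ∧ v i = (2 * (k : ℝ) - 1) / 4)
    (hvmem' : ∀ i, ∃ k : ℕ, 1 ≤ k ∧ v' i = (2 * (k : ℝ) - 1) / 4)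
    (htri : ∃ p : ℕ → ℕ, IsPartition n p ∧ IsVQuarter n p v)
    (hlt : enormR v' < enormR v)
    (q q' : ℕ → ℕ) (hq : IsPQuarter n v q) (hq' : IsPQuarter n v' q') :
    ¬ Dominates q q' := by
  classical
  intro hdom
  obtain ⟨p, hp, hvq⟩ := htri
  obtain ⟨hqpart, hqmult⟩ := hq
  obtain ⟨hq'part, hq'mult⟩ := hq'
  choose κ hκ1 hκv using hvmem
  choose κ' hκ'1 hκ'v using hvmem'
  have hwv : ∀ i, v i = S9aux.Lv (κ i) := hκv
  have hwv' : ∀ i, v' i = S9aux.Lv (κ' i) := hκ'v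
  set K := (n ⊔ univ.sup κ) ⊔ univ.sup κ' with hKdef
  have hnK : n ≤ K := le_trans le_sup_left le_sup_left
  have hκK : ∀ i, κ i ≤ K := fun i =>
    le_trans (le_trans (Finset.le_sup (mem_univ i)) le_sup_right) le_sup_left
  have hκ'K : ∀ i, κ' i ≤ K := fun i =>
    le_trans (Finset.le_sup (mem_univ i)) le_sup_right
  -- multiplicity functions
  have hM : ∀ k, 1 ≤ k → S9aux.multF v (S9aux.Lv k) = p (k - 1) := fun k hk =>
    (S9aux.multR_eq_multF v (S9aux.Lv k)).symm.trans (hvq.2.2 k hk)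
  have hMn : ∀ k, S9aux.multF v (S9aux.Lv k) ≤ n := fun k => S9aux.multF_le v _
  have hM'n : ∀ k, S9aux.multF v' (S9aux.Lv k) ≤ n := fun k => S9aux.multF_le v' _
  have hM'K : ∀ k, 1 ≤ S9aux.multF v' (S9aux.Lv k) → k ≤ K := by
    intro k hk
    obtain ⟨i, hi⟩ := S9aux.exists_of_multF_pos hk
    have : κ' i = k := S9aux.Lv_eq.1 ((hwv' i).symm.trans hi)
    rw [← this]
    exact hκ'K i
  have hmultq : ∀ c, 1 ≤ c →
      mult n q c = ((Icc 1 K).filter fun k => S9aux.multF v (S9aux.Lv k) = c).card :=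
    fun c hc => (hqmult c hc).trans (S9aux.ncard_eq_filter v κ hwv hκK c hc)
  have hmultq' : ∀ c, 1 ≤ c →
      mult n q' c = ((Icc 1 K).filter fun k => S9aux.multF v' (S9aux.Lv k) = c).card :=
    fun c hc => (hq'mult c hc).trans (S9aux.ncard_eq_filter v' κ' hwv' hκ'K c hc)
  -- partial sum comparisons
  have hsum_q' : ∀ t, ∑ k ∈ Icc 1 t, S9aux.multF v' (S9aux.Lv k) ≤ ∑ k ∈ range t, q' k := by
    intro t
    calc ∑ k ∈ Icc 1 t, S9aux.multF v' (S9aux.Lv k)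
        ≤ ∑ c ∈ Icc 1 n, min t
            (((Icc 1 K).filter fun k => c ≤ S9aux.multF v' (S9aux.Lv k)).card) :=
          S9aux.msum_le _ hM'n hM'K t
      _ = ∑ k ∈ range t, q' k := by
          rw [S9aux.part_sum_min hq'part t]
          apply Finset.sum_congr rfl
          intro c hc
          rw [S9aux.count_ge_eq hq'part _ hM'n hmultq' c (mem_Icc.1 hc).1]
  have hsum_v : ∀ t, ∑ k ∈ Icc 1 t, S9aux.multF v (S9aux.Lv k) = ∑ k ∈ range t, q k := by
    intro t
    have h1 : ∑ k ∈ Icc 1 t, S9aux.multF v (S9aux.Lv k) = ∑ k ∈ range t, p k := by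
      rw [← Finset.Ico_add_one_right_eq_Icc, Finset.sum_Ico_eq_sum_range]
      have ht : t + 1 - 1 = t := by omega
      rw [ht]
      apply Finset.sum_congr rfl
      intro i _
      rw [hM (1 + i) (by omega)]
      congr 1
      omega
    have h2 : ∑ k ∈ range t, q k = ∑ k ∈ range t, p k := by
      rw [S9aux.part_sum_min hqpart t, S9aux.part_sum_min hp t]
      apply Finset.sum_congr rfl
      intro c hc
      have hc1 : 1 ≤ c := (mem_Icc.1 hc).1
      rw [S9aux.count_ge_eq hqpart _ hMn hmultq c hc1,
        S9aux.reindex_count hp _ hM hnK c hc1]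
    omega
  have hNc : ∀ t, S9aux.NcF n v (t+1) ≤ S9aux.NcF n v' (t+1) := by
    intro t
    have h1 := S9aux.count_mult v κ hκ1 hwv t
    have h2 := S9aux.count_mult v' κ' hκ'1 hwv' t
    have h3 := hsum_v t
    have h4 := hsum_q' t
    have h5 := hdom t
    omega
  have hnorm : ∑ i, (v i)^2 ≤ ∑ i, (v' i)^2 := by
    rw [S9aux.normsq_formula (K := K) v κ hκK hwv,
      S9aux.normsq_formula (K := K) v' κ' hκ'K hwv']
    apply add_le_add_right
    apply Finset.sum_le_sum
    intro j hj
    have hj2 : 2 ≤ j := (mem_Icc.1 hj).1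
    have hcount : S9aux.NcF n v j ≤ S9aux.NcF n v' j := by
      obtain ⟨t, rfl⟩ : ∃ t, j = t + 1 := ⟨j - 1, by omega⟩
      exact hNc t
    have hd : (0:ℝ) ≤ ((j:ℝ)-1)/2 := by
      have : (2:ℝ) ≤ j := by exact_mod_cast hj2
      linarith
    exact mul_le_mul_of_nonneg_left (by exact_mod_cast hcount) hd
  have : enormR v ≤ enormR v' := by
    rw [enormR, enormR]
    exact Real.sqrt_le_sqrt hnorm
  linarith
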